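/- For n ≥ 2, the real vector space R_n = {R ∈ ℝ^{n×n} : Σ_i r_{i,σ(i)} = 0 for all σ ∈ S_n} has dimension 2n − 2. -/
import Mathlib

/-- The space of preserver exponents: matrices all of whose σ-traces vanish. -/
def Rspace (n : ℕ) : Submodule ℝ (Matrix (Fin n) (Fin n) ℝ) where
  carrier := {R | ∀ σ : Equiv.Perm (Fin n), ∑ i, R i (σ i) = 0}
  add_mem' := by
    intro A B hA hB σ
    simp [Matrix.add_apply, Finset.sum_add_distrib, hA σ, hB σ]
  zero_mem' := by intro σ; simp
  smul_mem' := by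
    intro c A hA σ
    simp [Matrix.smul_apply, smul_eq_mul, ← Finset.mul_sum, hA σ]

lemma Rspace.exchange {n : ℕ} {R : Matrix (Fin n) (Fin n) ℝ} (hR : R ∈ Rspace n)
    (σ : Equiv.Perm (Fin n)) (a b : Fin n) :
    R a (σ a) + R b (σ b) = R a (σ b) + R b (σ a) := by
  rcases eq_or_ne a b with rfl | hab
  · ring
  have h1 := hR σ
  have h2 := hR (σ * Equiv.swap a b)
  simp only [Equiv.Perm.mul_apply] at h2
  have key : ∑ k, (R k (σ k) - R k (σ (Equiv.swap a b k))) = 0 := by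
    simp only [Finset.sum_sub_distrib, h1, h2, sub_zero]
  have hsub : ({a, b} : Finset (Fin n)) ⊆ Finset.univ := Finset.subset_univ _
  have key2 : ∑ k ∈ ({a, b} : Finset (Fin n)),
      (R k (σ k) - R k (σ (Equiv.swap a b k))) = 0 := by
    rw [← key]
    refine Finset.sum_subset hsub ?_
    intro x _ hx
    simp only [Finset.mem_insert, Finset.mem_singleton, not_or] at hx
    rw [Equiv.swap_apply_of_ne_of_ne hx.1 hx.2, sub_self]
  rw [Finset.sum_pair hab, Equiv.swap_apply_left, Equiv.swap_apply_right] at key2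
  linarith

/-- key decomposition: `R i j + R 0 0 = R i 0 + R 0 j` for `R ∈ Rspace`. -/
lemma Rspace.decomp {m : ℕ} {R : Matrix (Fin (m+2)) (Fin (m+2)) ℝ} (hR : R ∈ Rspace (m+2))
    (i j : Fin (m+2)) : R i j + R 0 0 = R i 0 + R 0 j := by
  rcases eq_or_ne i 0 with rfl | hi
  · ring
  rcases eq_or_ne j 0 with rfl | hj
  · ring
  have := Rspace.exchange hR (Equiv.swap i j) i 0
  rwa [Equiv.swap_apply_left, Equiv.swap_apply_of_ne_of_ne (Ne.symm hi) (Ne.symm hj)] at this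

noncomputable def fwd (m : ℕ) : (Rspace (m+2)) →ₗ[ℝ] ((Fin (m+1) → ℝ) × (Fin (m+1) → ℝ)) where
  toFun R := (fun i => R.1 i.succ 0 - R.1 0 0, fun j => R.1 0 j.succ)
  map_add' R S := by
    ext i
    · simp [Matrix.add_apply]; ring
    · simp [Matrix.add_apply]
  map_smul' c R := by
    ext i
    · simp [Matrix.smul_apply]; ring
    · simp [Matrix.smul_apply]

noncomputable def bwdMat (m : ℕ) (p : (Fin (m+1) → ℝ) × (Fin (m+1) → ℝ)) :
    Matrix (Fin (m+2)) (Fin (m+2)) ℝ :=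
  fun i j => (Fin.cases 0 p.1 : Fin (m+2) → ℝ) i +
    (Fin.cases (-(∑ k, p.1 k + ∑ k, p.2 k)) p.2 : Fin (m+2) → ℝ) j

lemma bwdMat_mem (m : ℕ) (p : (Fin (m+1) → ℝ) × (Fin (m+1) → ℝ)) :
    bwdMat m p ∈ Rspace (m+2) := by
  intro σ
  unfold bwdMat
  rw [Finset.sum_add_distrib]
  rw [Equiv.sum_comp σ (fun j => (Fin.cases (-(∑ k, p.1 k + ∑ k, p.2 k)) p.2 : Fin (m+2) → ℝ) j)]
  rw [Fin.sum_univ_succ (f := fun i => (Fin.cases 0 p.1 : Fin (m+2) → ℝ) i),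
    Fin.sum_univ_succ (f := fun j => (Fin.cases (-(∑ k, p.1 k + ∑ k, p.2 k)) p.2 : Fin (m+2) → ℝ) j)]
  simp only [Fin.cases_zero, Fin.cases_succ]
  ring

noncomputable def bwd (m : ℕ) : ((Fin (m+1) → ℝ) × (Fin (m+1) → ℝ)) →ₗ[ℝ] (Rspace (m+2)) where
  toFun p := ⟨bwdMat m p, bwdMat_mem m p⟩
  map_add' p q := by
    ext i j
    show bwdMat m (p + q) i j = bwdMat m p i j + bwdMat m q i j
    unfold bwdMat
    induction i using Fin.cases <;> induction j using Fin.cases <;>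
      simp [Finset.sum_add_distrib] <;> ring
  map_smul' c p := by
    ext i j
    show bwdMat m (c • p) i j = c * bwdMat m p i j
    unfold bwdMat
    induction i using Fin.cases <;> induction j using Fin.cases <;>
      simp [Finset.mul_sum, mul_add, Finset.sum_add_distrib] <;> ring

lemma finrank_aux (m : ℕ) : Module.finrank ℝ (Rspace (m+2)) = 2 * (m+2) - 2 := by
  have hfg : (fwd m).comp (bwd m) = LinearMap.id := by
    apply LinearMap.ext; intro p
    refine Prod.ext (funext fun i => ?_) (funext fun j => ?_)
    · show bwdMat m p i.succ 0 - bwdMat m p 0 0 = p.1 i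
      unfold bwdMat; simp
    · show bwdMat m p 0 j.succ = p.2 j
      unfold bwdMat; simp
  have hgf : (bwd m).comp (fwd m) = LinearMap.id := by
    apply LinearMap.ext; intro R
    apply Subtype.ext
    ext i j
    show bwdMat m ((fwd m) R) i j = R.1 i j
    have hR := R.2
    have h1 := hR 1
    simp only [Equiv.Perm.one_apply] at h1
    have hd := fun i j => Rspace.decomp hR i j
    set S1 := ∑ i : Fin (m+1), R.1 i.succ 0 with hS1
    set S2 := ∑ j : Fin (m+1), R.1 0 j.succ with hS2
    have hsum : (R.1 0 0 + S1) + (R.1 0 0 + S2) = (m+2) * R.1 0 0 := by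
      have h2 : ∑ k : Fin (m+2), (R.1 k k + R.1 0 0) = ∑ k : Fin (m+2), (R.1 k 0 + R.1 0 k) :=
        Finset.sum_congr rfl (fun k _ => hd k k)
      rw [Finset.sum_add_distrib, Finset.sum_add_distrib, h1, Finset.sum_const,
        Finset.card_univ, Fintype.card_fin, zero_add,
        Fin.sum_univ_succ (f := fun k => R.1 k 0), Fin.sum_univ_succ (f := fun k => R.1 0 k)] at h2
      rw [← hS1, ← hS2] at h2
      push_cast [nsmul_eq_mul] at h2
      linarith
    -- the (0,0) entry of bwdMat of (fwd R)
    have hB0 : -(∑ i : Fin (m+1), (R.1 i.succ 0 - R.1 0 0) + S2) = R.1 0 0 := by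
      rw [Finset.sum_sub_distrib, Finset.sum_const, Finset.card_univ, Fintype.card_fin, ← hS1]
      push_cast [nsmul_eq_mul]
      linarith
    unfold bwdMat fwd
    induction i using Fin.cases with
    | zero =>
      induction j using Fin.cases with
      | zero => simpa using hB0
      | succ j => simp
    | succ i =>
      induction j using Fin.cases with
      | zero =>
        simp only [Fin.cases_succ, Fin.cases_zero, LinearMap.coe_mk, AddHom.coe_mk]
        rw [← hS2]
        rw [hB0]
        ring
      | succ j =>
        simp only [Fin.cases_succ, LinearMap.coe_mk, AddHom.coe_mk]
        have := hd i.succ j.succ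
        linarith
  have e : (Rspace (m+2)) ≃ₗ[ℝ] ((Fin (m+1) → ℝ) × (Fin (m+1) → ℝ)) :=
    LinearEquiv.ofLinear (fwd m) (bwd m) hfg hgf
  rw [e.finrank_eq]
  simp [Module.finrank_prod]
  omega

theorem finrank_Rspace {n : ℕ} (hn : 2 ≤ n) :
    Module.finrank ℝ (Rspace n) = 2 * n - 2 := by
  obtain ⟨m, rfl⟩ : ∃ m, n = m + 2 := ⟨n - 2, by omega⟩
  exact finrank_aux m
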